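/- Let f be a transcendental entire function and m ∈ ℕ, m ≥ 1. If z satisfies |f^n(z)| ≥ M^n(R, f) for all n ∈ ℕ (i.e. z ∈ A_R(f)), then |(f^m)^n(z)| ≥ M^n(R, f^m) for all n ∈ ℕ (i.e. z ∈ A_R(f^m)), where R > 0 satisfies M(r, f) > r for r ≥ R. -/

import Mathlib

open Complex Filter Set Function

noncomputable def maxMod (f : ℂ → ℂ) (r : ℝ) : ℝ :=
  sSup ((fun z => ‖f z‖) '' {z : ℂ | ‖z‖ = r})

def TranscendentalEntire (f : ℂ → ℂ) : Prop :=
  Differentiable ℂ f ∧ ¬ ∃ p : Polynomial ℂ, ∀ z, f z = p.eval z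

noncomputable def ALevel (f : ℂ → ℂ) (R : ℝ) (L : ℤ) : Set ℂ :=
  {z : ℂ | ∀ n : ℕ, 0 ≤ (n : ℤ) + L →
    ‖f^[n] z‖ ≥ (maxMod f)^[((n : ℤ) + L).toNat] R}

noncomputable def Afast (f : ℂ → ℂ) (R : ℝ) : Set ℂ :=
  ⋃ L : ℕ, ALevel f R (-(L : ℤ))

lemma sphere_set_eq (r : ℝ) : {z : ℂ | ‖z‖ = r} = Metric.sphere 0 r := by
  ext z; simp [Complex.dist_eq]

lemma bddAbove_maxMod_set {g : ℂ → ℂ} (hg : Differentiable ℂ g) (r : ℝ) :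
    BddAbove ((fun z => ‖g z‖) '' {z : ℂ | ‖z‖ = r}) := by
  rw [sphere_set_eq]
  exact ((isCompact_sphere (0 : ℂ) r).image
    (continuous_norm.comp hg.continuous)).bddAbove

/-- Maximum modulus principle: values inside the disc are bounded by `maxMod`. -/
lemma abs_le_maxMod {g : ℂ → ℂ} (hg : Differentiable ℂ g) {s : ℝ} (hs : 0 < s)
    {w : ℂ} (hw : ‖w‖ ≤ s) : ‖g w‖ ≤ maxMod g s := by
  apply Complex.norm_le_of_forall_mem_frontier_norm_le
    (Metric.isBounded_ball (x := (0 : ℂ)) (r := s)) hg.diffContOnCl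
  · intro z hz
    rw [frontier_ball (0 : ℂ) hs.ne'] at hz
    refine le_csSup (bddAbove_maxMod_set hg s) ⟨z, ?_, rfl⟩
    rw [sphere_set_eq]; exact hz
  · rw [closure_ball (0 : ℂ) hs.ne', Metric.mem_closedBall, Complex.dist_eq, sub_zero]
    exact hw

lemma maxMod_nonneg {g : ℂ → ℂ} (hg : Differentiable ℂ g) {r : ℝ} (hr : 0 ≤ r) :
    0 ≤ maxMod g r := by
  have : ‖g r‖ ∈ (fun z => ‖g z‖) '' {z : ℂ | ‖z‖ = r} :=
    ⟨(r : ℂ), by simp [abs_of_nonneg hr], rfl⟩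
  exact le_trans (norm_nonneg _) (le_csSup (bddAbove_maxMod_set hg r) this)

lemma maxMod_mono {g : ℂ → ℂ} (hg : Differentiable ℂ g) {r s : ℝ} (hr : 0 ≤ r)
    (hs : 0 < s) (hrs : r ≤ s) : maxMod g r ≤ maxMod g s := by
  have hne : ((fun z => ‖g z‖) '' {z : ℂ | ‖z‖ = r}).Nonempty :=
    ⟨‖g r‖, ⟨(r : ℂ), by simp [abs_of_nonneg hr], rfl⟩⟩
  apply csSup_le hne
  rintro x ⟨z, hz, rfl⟩
  exact abs_le_maxMod hg hs (by rw [hz]; exact hrs)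

lemma iterate_maxMod_nonneg {g : ℂ → ℂ} (hg : Differentiable ℂ g) {R : ℝ} (hR : 0 ≤ R) :
    ∀ n : ℕ, 0 ≤ (maxMod g)^[n] R := by
  intro n
  induction n with
  | zero => simpa
  | succ n ih =>
    rw [Function.iterate_succ_apply']
    exact maxMod_nonneg hg ih

lemma iterate_maxMod_ge {f : ℂ → ℂ} {R : ℝ} (hM : ∀ r ≥ R, maxMod f r > r) :
    ∀ k : ℕ, (maxMod f)^[k] R ≥ R := by
  intro k
  induction k with
  | zero => simp
  | succ k ih =>
    rw [Function.iterate_succ_apply']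
    exact le_trans ih (hM _ ih).le

lemma maxMod_iterate_le {f : ℂ → ℂ} (hf : Differentiable ℂ f) {R : ℝ} (hR : 0 < R)
    (hM : ∀ r ≥ R, maxMod f r > r) (m : ℕ) (hm : 1 ≤ m) :
    ∀ r ≥ R, maxMod (f^[m]) r ≤ (maxMod f)^[m] r := by
  induction m, hm using Nat.le_induction with
  | base => simp
  | succ m hm ih =>
    intro r hr
    have hrpos : 0 < r := lt_of_lt_of_le hR hr
    have hMr : maxMod f r ≥ R := le_trans hr (hM r hr).le
    have hMrpos : 0 < maxMod f r := lt_of_lt_of_le hR hMr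
    have hne : ((fun z => ‖f^[m+1] z‖) '' {z : ℂ | ‖z‖ = r}).Nonempty :=
      ⟨‖f^[m+1] r‖, ⟨(r : ℂ), by simp [abs_of_nonneg hrpos.le], rfl⟩⟩
    apply csSup_le hne
    rintro x ⟨w, hw, rfl⟩
    have h1 : ‖f w‖ ≤ maxMod f r := abs_le_maxMod hf hrpos (le_of_eq hw)
    calc ‖f^[m+1] w‖ = ‖f^[m] (f w)‖ := by
            rw [Function.iterate_succ_apply]
      _ ≤ maxMod (f^[m]) (maxMod f r) := abs_le_maxMod (hf.iterate m) hMrpos h1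
      _ ≤ (maxMod f)^[m] (maxMod f r) := ih _ hMr
      _ = (maxMod f)^[m+1] r := (Function.iterate_succ_apply _ _ _).symm

theorem AR_subset_AR_iterate (f : ℂ → ℂ) (hf : TranscendentalEntire f)
    (m : ℕ) (hm : 1 ≤ m) (R : ℝ) (hR : 0 < R) (hM : ∀ r ≥ R, maxMod f r > r)
    (z : ℂ) (hz : ∀ n : ℕ, ‖f^[n] z‖ ≥ (maxMod f)^[n] R) :
    ∀ n : ℕ, ‖(f^[m])^[n] z‖ ≥ (maxMod (f^[m]))^[n] R := by
  obtain ⟨hdiff, -⟩ := hf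
  have key : ∀ n : ℕ, (maxMod (f^[m]))^[n] R ≤ (maxMod f)^[m * n] R := by
    intro n
    induction n with
    | zero => simp
    | succ n ih =>
      have hb : (maxMod f)^[m * n] R ≥ R := iterate_maxMod_ge hM _
      have ha0 : 0 ≤ (maxMod (f^[m]))^[n] R := iterate_maxMod_nonneg (hdiff.iterate m) hR.le n
      calc (maxMod (f^[m]))^[n+1] R
          = maxMod (f^[m]) ((maxMod (f^[m]))^[n] R) := Function.iterate_succ_apply' _ _ _
        _ ≤ maxMod (f^[m]) ((maxMod f)^[m * n] R) :=
            maxMod_mono (hdiff.iterate m) ha0 (lt_of_lt_of_le hR hb) (le_trans ih (le_refl _))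
        _ ≤ (maxMod f)^[m] ((maxMod f)^[m * n] R) :=
            maxMod_iterate_le hdiff hR hM m hm _ hb
        _ = (maxMod f)^[m * (n+1)] R := by
            rw [Nat.mul_succ, Nat.add_comm, Function.iterate_add_apply]
  intro n
  have := hz (m * n)
  rw [Function.iterate_mul] at this
  exact le_trans (key n) this
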